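/- The function θ(r) = 2 arctan(2κ/(μ² r)) solves the radial Euler–Lagrange equation θ'' = -θ'/r + sin(2θ)/(2r²) - 2κ sin²θ/r + μ² sinθ (1 - cosθ) for all r > 0, and satisfies the boundary conditions θ(r) → π as r → 0⁺ and θ(r) → 0 as r → ∞. -/

import Mathlib

open Real Filter Topology

/-- The hedgehog profile `θ(r) = 2 arctan(2κ/(μ² r))` solves the radial Euler–Lagrange
equation and satisfies the boundary conditions `θ → π` as `r → 0⁺` and `θ → 0` as `r → ∞`. -/
theorem hedgehog_profile_solution (κ μ : ℝ) (hκ : 0 < κ) (hμ : 0 < μ) :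
    let θ : ℝ → ℝ := fun r => 2 * Real.arctan (2 * κ / (μ ^ 2 * r))
    (∀ r : ℝ, 0 < r →
      deriv (deriv θ) r =
        -(deriv θ r) / r + Real.sin (2 * θ r) / (2 * r ^ 2)
          - 2 * κ * (Real.sin (θ r)) ^ 2 / r
          + μ ^ 2 * Real.sin (θ r) * (1 - Real.cos (θ r)))
    ∧ Tendsto θ (nhdsWithin 0 (Set.Ioi 0)) (nhds π)
    ∧ Tendsto θ atTop (nhds 0) := by
  intro θ
  have hμ2 : (0:ℝ) < μ ^ 2 := by positivity
  set a : ℝ := 2 * κ / μ ^ 2 with ha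
  have ha0 : 0 < a := by positivity
  have hθ : θ = fun r => 2 * Real.arctan (a / r) := by
    funext r; simp only [θ, ha, div_div]
  have hκa : κ = μ ^ 2 * a / 2 := by
    rw [ha]; field_simp
  -- first derivative
  have hd1 : ∀ r : ℝ, 0 < r → HasDerivAt θ (-2 * a / (r ^ 2 + a ^ 2)) r := by
    intro r hr
    have hrne : r ≠ 0 := ne_of_gt hr
    have h1 : HasDerivAt (fun x : ℝ => a / x) (a * (-(r ^ 2)⁻¹)) r := by
      simpa [div_eq_mul_inv] using (hasDerivAt_inv hrne).const_mul a
    have h2 : HasDerivAt (fun x : ℝ => 2 * Real.arctan (a / x))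
        (2 * (1 / (1 + (a / r) ^ 2) * (a * (-(r ^ 2)⁻¹)))) r :=
      ((Real.hasDerivAt_arctan (a / r)).comp r h1).const_mul 2
    rw [hθ]
    convert h2 using 1
    have h3 : 1 + (a / r) ^ 2 ≠ 0 := by positivity
    have h4 : r ^ 2 + a ^ 2 ≠ 0 := by positivity
    field_simp
  -- the EL equation
  refine ⟨?_, ?_, ?_⟩
  · intro r hr
    have hrne : r ≠ 0 := ne_of_gt hr
    have h4 : r ^ 2 + a ^ 2 ≠ 0 := by positivity
    -- second derivative
    have hg : HasDerivAt (fun x : ℝ => -2 * a / (x ^ 2 + a ^ 2))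
        (4 * a * r / (r ^ 2 + a ^ 2) ^ 2) r := by
      have hp : HasDerivAt (fun x : ℝ => x ^ 2 + a ^ 2) (2 * r) r := by
        simpa using (hasDerivAt_pow 2 r).add_const (a ^ 2)
      have := (hp.inv h4).const_mul (-2 * a)
      simp only [div_eq_mul_inv] at *
      exact this.congr_deriv (by ring)
    have heq : deriv θ =ᶠ[nhds r] (fun x : ℝ => -2 * a / (x ^ 2 + a ^ 2)) := by
      filter_upwards [isOpen_Ioi.mem_nhds hr] with x hx using (hd1 x hx).deriv
    have h2nd : deriv (deriv θ) r = 4 * a * r / (r ^ 2 + a ^ 2) ^ 2 := by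
      rw [heq.deriv_eq]; exact hg.deriv
    have h1st : deriv θ r = -2 * a / (r ^ 2 + a ^ 2) := (hd1 r hr).deriv
    -- trig values
    have hsq : Real.sqrt (1 + (a / r) ^ 2) ^ 2 = 1 + (a / r) ^ 2 :=
      Real.sq_sqrt (by positivity)
    have hsne : Real.sqrt (1 + (a / r) ^ 2) ≠ 0 := by positivity
    have htne : (1 : ℝ) + (a / r) ^ 2 ≠ 0 := by positivity
    have hθr : θ r = 2 * Real.arctan (a / r) := by rw [hθ]
    have hs : Real.sin (θ r) = 2 * (a / r) / (1 + (a / r) ^ 2) := by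
      rw [hθr, Real.sin_two_mul, Real.sin_arctan, Real.cos_arctan]
      have hss : (1:ℝ) + (a / r) ^ 2 = Real.sqrt (1 + (a / r) ^ 2) * Real.sqrt (1 + (a / r) ^ 2) :=
        (Real.mul_self_sqrt (by positivity)).symm
      conv_rhs => rw [hss]
      field_simp
    have hc : Real.cos (θ r) = (1 - (a / r) ^ 2) / (1 + (a / r) ^ 2) := by
      rw [hθr, Real.cos_two_mul, Real.cos_arctan]
      rw [div_pow, one_pow, hsq]
      field_simp
      ring
    have hs2 : Real.sin (2 * θ r) = 2 * Real.sin (θ r) * Real.cos (θ r) :=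
      Real.sin_two_mul (θ r)
    rw [h2nd, h1st, hs2, hs, hc, hκa]
    field_simp
    ring
  · -- r → 0⁺
    rw [hθ]
    have h1 : Tendsto (fun r : ℝ => a / r) (nhdsWithin 0 (Set.Ioi 0)) atTop := by
      simpa [div_eq_mul_inv] using tendsto_inv_nhdsGT_zero.const_mul_atTop ha0
    have h2 : Tendsto Real.arctan atTop (nhds (π / 2)) :=
      Real.tendsto_arctan_atTop.mono_right nhdsWithin_le_nhds
    have h3 := (h2.comp h1).const_mul 2
    have hpi : (2:ℝ) * (π / 2) = π := by ring
    simpa [hpi] using h3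
  · -- r → ∞
    rw [hθ]
    have h1 : Tendsto (fun r : ℝ => a / r) atTop (nhds 0) := by
      simpa [div_eq_mul_inv] using tendsto_inv_atTop_zero.const_mul a
    have h2 := ((Real.continuous_arctan.tendsto 0).comp h1).const_mul 2
    simpa using h2
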